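/- Let β, γ ∈ (0,1), let λ_S, λ_I, λ_R ∈ (0,1), and for each pair H, J ∈ {S,I,R} let μ_{HJ} be a Borel probability measure on ℝ with zero mean and common finite variance σ². Assume the contraction condition ν := max_{H,J∈{S,I,R}} ( λ_J² + ∫_ℝ (1−λ_J+η)² dμ_{JH}(η) ) < 1. For J ∈ {S,I,R} let f_J, g_J : [0,∞) × ℝ → [0,∞) be two families such that for each t ≥ 0 the functions f_J(t,·), g_J(t,·) are nonnegative and integrable with Σ_{J} ∫_ℝ f_J(t,w) dw = Σ_{J} ∫_ℝ g_J(t,w) dw = 1, and whose Fourier transforms F_J(ξ,t) = ∫_ℝ e^{−iwξ} f_J(t,w) dw (and analogously G_J) are, for each fixed ξ ∈ ℝ, differentiable in t and satisfy the Fourier-transformed kinetic system: ∂_t F_S(ξ,t) = −β I_f(t) F_S(ξ,t) + Σ_{J∈{S,I,R}} [ (∫_ℝ F_S((1−λ_S+η)ξ, t) dμ_{SJ}(η)) F_J(λ_J ξ, t) − (∫_ℝ f_J(t,w)dw) F_S(ξ,t) ]; ∂_t F_I(ξ,t) = β I_f(t) F_S(ξ,t) − γ F_I(ξ,t) + Σ_{J∈{S,I,R}}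 [ (∫_ℝ F_I((1−λ_I+η)ξ, t) dμ_{IJ}(η)) F_J(λ_J ξ, t) − (∫_ℝ f_J(t,w)dw) F_I(ξ,t) ]; ∂_t F_R(ξ,t) = γ F_I(ξ,t) + Σ_{J∈{S,I,R}} [ (∫_ℝ F_R((1−λ_R+η)ξ, t) dμ_{RJ}(η)) F_J(λ_J ξ, t) − (∫_ℝ f_J(t,w)dw) F_R(ξ,t) ], where I_f(t) = ∫_ℝ f_I(t,w) dw, and the same system holds for G_J with I_g(t) = ∫_ℝ g_I(t,w)dw. Assume moreover that for every t ≥ 0 and every J ∈ {S,I,R} the masses ∫_ℝ f_J(t,w)dw = ∫_ℝ g_J(t,w)dw and the first moments ∫_ℝ w f_J(t,w)dw = ∫_ℝ w g_J(t,w)dw coincide, and that Σ_{J} d₂(f_J(0,·), g_J(0,·)) < ∞. Then for all t ≥ 0: Σ_{J∈{S,I,R}} d₂(f_J(t,·), g_J(t,·)) ≤ e^{−(1−ν)t} · Σ_{J∈{S,I,R}} d₂(f_J(0,·), g_J(0,·)). -/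

import Mathlib

open MeasureTheory
open scoped ENNReal

/-- The three epidemiological classes: susceptible, infectious, recovered. -/
inductive Cls : Type
  | S | I | R
deriving DecidableEq

instance : Fintype Cls :=
  ⟨{Cls.S, Cls.I, Cls.R}, fun x => by cases x <;> simp⟩

/-- The Fourier transform `f̂(ξ) = ∫ e^{-iwξ} f(w) dw` of an integrable function. -/
noncomputable def ft (f : ℝ → ℝ) (ξ : ℝ) : ℂ :=
  ∫ w : ℝ, Complex.exp (-Complex.I * (w : ℂ) * (ξ : ℂ)) * (f w : ℂ)

/-- The Fourier-based distance `d₂(f,g) = sup_{ξ≠0} |f̂(ξ)-ĝ(ξ)|/ξ²`. -/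
noncomputable def d2 (f g : ℝ → ℝ) : ℝ≥0∞ :=
  ⨆ ξ : {x : ℝ // x ≠ 0},
    ENNReal.ofReal (‖ft f (ξ : ℝ) - ft g (ξ : ℝ)‖ / (ξ : ℝ) ^ 2)

/-- The Fourier transform of the wealth-exchange Boltzmann collision operator
`∑_J Q(f_H, f_J)`:
`∑_J [(∫ f̂_H((1-λ_H+η)ξ) dμ_{HJ}(η)) f̂_J(λ_J ξ) - (∫ f_J) f̂_H(ξ)]`. -/
noncomputable def collision (lam : Cls → ℝ) (μ : Cls → Cls → Measure ℝ)
    (f : Cls → ℝ → ℝ) (H : Cls) (ξ : ℝ) : ℂ :=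
  ∑ J : Cls, ((∫ η, ft (f H) ((1 - lam H + η) * ξ) ∂(μ H J)) * ft (f J) (lam J * ξ)
    - ((∫ w, f J w : ℝ) : ℂ) * ft (f H) ξ)


open Real Set Filter Asymptotics
open scoped Topology

section Helpers

lemma ft_norm_integrand (w ξ : ℝ) (fw : ℝ) :
    ‖Complex.exp (-Complex.I * (w : ℂ) * (ξ : ℂ)) * (fw : ℂ)‖ = |fw| := by
  rw [norm_mul, Complex.norm_exp]
  have : (-Complex.I * (w : ℂ) * (ξ : ℂ)).re = 0 := by simp
  rw [this, Real.exp_zero, one_mul, Complex.norm_real, Real.norm_eq_abs]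

lemma ft_norm_le {f : ℝ → ℝ} (hpos : ∀ w, 0 ≤ f w) (ξ : ℝ) :
    ‖ft f ξ‖ ≤ ∫ w, f w := by
  refine (norm_integral_le_integral_norm _).trans (le_of_eq ?_)
  congr 1 with w
  rw [ft_norm_integrand, abs_of_nonneg (hpos w)]

lemma ft_zero (f : ℝ → ℝ) : ft f 0 = ((∫ w, f w : ℝ) : ℂ) := by
  unfold ft
  simp only [Complex.ofReal_zero, mul_zero, Complex.exp_zero, one_mul]
  exact integral_ofReal

lemma ft_continuous {f : ℝ → ℝ} (hf : Integrable f) : Continuous (ft f) := by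
  refine continuous_of_dominated (bound := fun w => |f w|) ?_ ?_ ?_ ?_
  · intro ξ
    exact (Complex.continuous_exp.comp (by continuity)).aestronglyMeasurable.mul
      (Complex.continuous_ofReal.comp_aestronglyMeasurable hf.1)
  · intro ξ
    exact Filter.Eventually.of_forall fun w => le_of_eq (ft_norm_integrand w ξ (f w))
  · exact hf.abs
  · exact Filter.Eventually.of_forall fun w => by
      apply Continuous.mul ?_ continuous_const
      exact Complex.continuous_exp.comp (by continuity)

lemma Cls.sum_def {M : Type*} [AddCommMonoid M] (u : Cls → M) :
    ∑ J : Cls, u J = u Cls.S + u Cls.I + u Cls.R := by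
  have h : (Finset.univ : Finset Cls) = {Cls.S, Cls.I, Cls.R} := rfl
  rw [h, Finset.sum_insert (by decide), Finset.sum_insert (by decide), Finset.sum_singleton]
  rw [add_assoc]

lemma d2_le {F G : ℝ → ℝ} {c : ℝ} (hc : 0 ≤ c)
    (h : ∀ ξ : ℝ, ξ ≠ 0 → ‖ft F ξ - ft G ξ‖ ≤ c * ξ ^ 2) :
    d2 F G ≤ ENNReal.ofReal c := by
  refine iSup_le fun ⟨ξ, hξ⟩ => ENNReal.ofReal_le_ofReal ?_
  have hξ2 : (0:ℝ) < ξ ^ 2 := by positivity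
  rw [div_le_iff₀ hξ2]
  simpa using h ξ hξ

lemma d2_toReal_le {F G : ℝ → ℝ} {c : ℝ} (hc : 0 ≤ c)
    (h : ∀ ξ : ℝ, ξ ≠ 0 → ‖ft F ξ - ft G ξ‖ ≤ c * ξ ^ 2) :
    (d2 F G).toReal ≤ c :=
  ENNReal.toReal_le_of_le_ofReal hc (d2_le hc h)

lemma d2_ge {F G : ℝ → ℝ} (hfin : d2 F G ≠ ⊤) {ξ : ℝ} (hξ : ξ ≠ 0) :
    ‖ft F ξ - ft G ξ‖ ≤ (d2 F G).toReal * ξ ^ 2 := by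
  have h1 : ENNReal.ofReal (‖ft F ξ - ft G ξ‖ / ξ ^ 2) ≤ d2 F G :=
    le_iSup (fun ζ : {x : ℝ // x ≠ 0} =>
      ENNReal.ofReal (‖ft F (ζ:ℝ) - ft G (ζ:ℝ)‖ / (ζ:ℝ) ^ 2)) ⟨ξ, hξ⟩
  have h2 := ENNReal.toReal_mono hfin h1
  have hξ2 : (0:ℝ) < ξ ^ 2 := by positivity
  rw [ENNReal.toReal_ofReal (by positivity)] at h2
  rw [div_le_iff₀ hξ2] at h2
  simpa using h2

lemma gB_nonneg {δ K ε x : ℝ} (hδ : 0 ≤ δ) (hε : 0 ≤ ε) (hx : 0 ≤ x) :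
    0 ≤ gronwallBound δ K ε x := by
  unfold gronwallBound
  split_ifs with hK
  · positivity
  · rcases lt_or_gt_of_ne hK with h | h
    · have h1 : Real.exp (K * x) ≤ 1 := Real.exp_le_one_iff.mpr (by nlinarith)
      have h2 : 0 < Real.exp (K * x) := Real.exp_pos _
      have h3 : ε / K ≤ 0 := div_nonpos_of_nonneg_of_nonpos hε h.le
      have : 0 ≤ ε / K * (Real.exp (K * x) - 1) := by nlinarith
      nlinarith
    · have h1 : 1 ≤ Real.exp (K * x) := by
        rw [show (1:ℝ) = Real.exp 0 by simp]
        exact Real.exp_le_exp.mpr (by positivity)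
      have : 0 ≤ ε / K * (Real.exp (K * x) - 1) :=
        mul_nonneg (div_nonneg hε h.le) (by linarith)
      nlinarith [Real.exp_pos (K * x)]

lemma gB_smul (a K ε x c : ℝ) :
    gronwallBound (a * c) K (ε * c) x = gronwallBound a K ε x * c := by
  unfold gronwallBound
  split_ifs
  · ring
  · ring

lemma gB_slope_eventually {δ K ε r t₀ : ℝ} (h : K * δ + ε < r) :
    ∀ᶠ z in 𝓝[>] t₀, (z - t₀)⁻¹ * (gronwallBound δ K ε (z - t₀) - δ) < r := by
  have hd : HasDerivAt (fun z => gronwallBound δ K ε (z - t₀)) (K * δ + ε) t₀ := by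
    have := hasDerivAt_gronwallBound_shift δ K ε t₀ t₀
    simpa [gronwallBound_x0] using this
  have hs := hasDerivAt_iff_tendsto_slope.mp hd
  have hs' : Tendsto (slope (fun z => gronwallBound δ K ε (z - t₀)) t₀) (𝓝[>] t₀)
      (𝓝 (K * δ + ε)) := hs.mono_left (nhdsWithin_mono _ (fun z hz => ne_of_gt hz))
  have := hs' (Iio_mem_nhds h)
  filter_upwards [this] with z hz
  simpa [slope, gronwallBound_x0, vsub_eq_sub, div_eq_inv_mul] using hz

lemma norm_slope_lt {φ : ℝ → ℂ} {t c r : ℝ} {k : ℂ} (hc : 0 ≤ c)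
    (hd : HasDerivAt φ (-(c : ℂ) * φ t + k) t) (hr : -c * ‖φ t‖ + ‖k‖ < r) :
    ∀ᶠ z in 𝓝[>] t, (z - t)⁻¹ * (‖φ z‖ - ‖φ t‖) < r := by
  set d : ℂ := -(c : ℂ) * φ t + k with hdd
  set ε : ℝ := (r - (-c * ‖φ t‖ + ‖k‖)) / 2 with hε
  have hε0 : 0 < ε := by rw [hε]; linarith
  have hlo : (fun z => φ z - φ t - (z - t) • d) =o[𝓝 t] fun z => z - t := hd.isLittleO
  have hev : ∀ᶠ z in 𝓝 t, ‖φ z - φ t - (z - t) • d‖ ≤ ε * ‖z - t‖ :=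
    hlo.bound hε0
  have hsm : ∀ᶠ z in 𝓝 t, c * (z - t) ≤ 1 := by
    have : Tendsto (fun z => c * (z - t)) (𝓝 t) (𝓝 (c * (t - t))) :=
      (continuous_const.mul (continuous_id.sub continuous_const)).tendsto t
    simp only [sub_self, mul_zero] at this
    exact this (Iic_mem_nhds one_pos)
  filter_upwards [eventually_nhdsWithin_of_eventually_nhds hev,
    eventually_nhdsWithin_of_eventually_nhds hsm, self_mem_nhdsWithin] with z h1 h2 (hz : t < z)
  have hzt : 0 < z - t := by linarith
  have key : ‖φ z‖ ≤ (1 - c * (z - t)) * ‖φ t‖ + (z - t) * ‖k‖ + ε * (z - t) := by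
    have e1 : ‖φ z‖ ≤ ‖φ t + (z - t) • d‖ + ε * (z - t) := by
      have := norm_sub_norm_le (φ z) (φ t + (z - t) • d)
      have h1' : ‖φ z - (φ t + (z - t) • d)‖ ≤ ε * (z - t) := by
        rw [show φ z - (φ t + (z - t) • d) = φ z - φ t - (z - t) • d by ring]
        calc _ ≤ ε * ‖z - t‖ := h1
        _ = ε * (z - t) := by rw [Real.norm_eq_abs, abs_of_pos hzt]
      linarith
    have e2 : ‖φ t + (z - t) • d‖ ≤ (1 - c * (z - t)) * ‖φ t‖ + (z - t) * ‖k‖ := by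
      have : φ t + (z - t) • d = ((1 - c * (z - t) : ℝ) : ℂ) * φ t + ((z - t : ℝ) : ℂ) * k := by
        rw [hdd]; push_cast; ring_nf; simp [Complex.real_smul]; ring
      rw [this]
      calc ‖((1 - c * (z - t) : ℝ) : ℂ) * φ t + ((z - t : ℝ) : ℂ) * k‖
          ≤ ‖((1 - c * (z - t) : ℝ) : ℂ) * φ t‖ + ‖((z - t : ℝ) : ℂ) * k‖ := norm_add_le _ _
        _ = |1 - c * (z - t)| * ‖φ t‖ + |z - t| * ‖k‖ := by
            rw [norm_mul, norm_mul, Complex.norm_real, Complex.norm_real,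
              Real.norm_eq_abs, Real.norm_eq_abs]
        _ ≤ (1 - c * (z - t)) * ‖φ t‖ + (z - t) * ‖k‖ := by
            rw [abs_of_nonneg (by linarith), abs_of_pos hzt]
    linarith
  rw [inv_mul_lt_iff₀ hzt]
  have hφn : 0 ≤ ‖φ t‖ := norm_nonneg _
  have : ‖φ z‖ - ‖φ t‖ ≤ (-c * ‖φ t‖ + ‖k‖ + ε) * (z - t) := by nlinarith
  have hlt : (-c * ‖φ t‖ + ‖k‖ + ε) < r := by rw [hε]; linarith
  nlinarith

end Helpers

set_option maxHeartbeats 2000000 in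
/-- **Exponential contraction of the Fourier distance `d₂` for the SIR-type kinetic
wealth-exchange system** (Theorem 1 of Dimarco, Pareschi, Toscani, Zanella,
"Wealth distribution under the spread of infectious diseases"). If
`ν = max_{H,J} (λ_J² + ∫ (1-λ_J+η)² dμ_{JH}) < 1`, then any two solutions of the
Fourier-transformed kinetic system with equal masses and mean wealths in each class
satisfy `∑_J d₂(f_J(t), g_J(t)) ≤ e^{-(1-ν)t} ∑_J d₂(f_J(0), g_J(0))`. -/
theorem kinetic_SIR_d2_contraction
    (β γ : ℝ) (hβ : β ∈ Set.Ioo (0:ℝ) 1) (hγ : γ ∈ Set.Ioo (0:ℝ) 1)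
    (lam : Cls → ℝ) (hlam : ∀ J, lam J ∈ Set.Ioo (0:ℝ) 1)
    (μ : Cls → Cls → Measure ℝ) (hμprob : ∀ H J, IsProbabilityMeasure (μ H J))
    (σ : ℝ)
    (hμint : ∀ H J, Integrable (fun η => η) (μ H J))
    (hμint2 : ∀ H J, Integrable (fun η => η ^ 2) (μ H J))
    (hμmean : ∀ H J, (∫ η, η ∂(μ H J)) = 0)
    (hμvar : ∀ H J, (∫ η, η ^ 2 ∂(μ H J)) = σ ^ 2)
    (ν : ℝ)
    (hνdef : ν = ⨆ H : Cls, ⨆ J : Cls,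
      (lam J ^ 2 + ∫ η, (1 - lam J + η) ^ 2 ∂(μ J H)))
    (hν : ν < 1)
    (f g : Cls → ℝ → ℝ → ℝ)
    (hfpos : ∀ J, ∀ t ≥ (0:ℝ), ∀ w, 0 ≤ f J t w)
    (hgpos : ∀ J, ∀ t ≥ (0:ℝ), ∀ w, 0 ≤ g J t w)
    (hfint : ∀ J, ∀ t ≥ (0:ℝ), Integrable (f J t))
    (hgint : ∀ J, ∀ t ≥ (0:ℝ), Integrable (g J t))
    (hfmass : ∀ t ≥ (0:ℝ), (∑ J : Cls, ∫ w, f J t w) = 1)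
    (hgmass : ∀ t ≥ (0:ℝ), (∑ J : Cls, ∫ w, g J t w) = 1)
    -- Fourier-transformed kinetic system for `f`
    (hfS : ∀ ξ : ℝ, ∀ t ≥ (0:ℝ), HasDerivAt (fun s => ft (f Cls.S s) ξ)
      (-(β : ℂ) * ((∫ w, f Cls.I t w : ℝ) : ℂ) * ft (f Cls.S t) ξ
        + collision lam μ (fun J => f J t) Cls.S ξ) t)
    (hfI : ∀ ξ : ℝ, ∀ t ≥ (0:ℝ), HasDerivAt (fun s => ft (f Cls.I s) ξ)
      ((β : ℂ) * ((∫ w, f Cls.I t w : ℝ) : ℂ) * ft (f Cls.S t) ξ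
        - (γ : ℂ) * ft (f Cls.I t) ξ
        + collision lam μ (fun J => f J t) Cls.I ξ) t)
    (hfR : ∀ ξ : ℝ, ∀ t ≥ (0:ℝ), HasDerivAt (fun s => ft (f Cls.R s) ξ)
      ((γ : ℂ) * ft (f Cls.I t) ξ
        + collision lam μ (fun J => f J t) Cls.R ξ) t)
    -- Fourier-transformed kinetic system for `g`
    (hgS : ∀ ξ : ℝ, ∀ t ≥ (0:ℝ), HasDerivAt (fun s => ft (g Cls.S s) ξ)
      (-(β : ℂ) * ((∫ w, g Cls.I t w : ℝ) : ℂ) * ft (g Cls.S t) ξ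
        + collision lam μ (fun J => g J t) Cls.S ξ) t)
    (hgI : ∀ ξ : ℝ, ∀ t ≥ (0:ℝ), HasDerivAt (fun s => ft (g Cls.I s) ξ)
      ((β : ℂ) * ((∫ w, g Cls.I t w : ℝ) : ℂ) * ft (g Cls.S t) ξ
        - (γ : ℂ) * ft (g Cls.I t) ξ
        + collision lam μ (fun J => g J t) Cls.I ξ) t)
    (hgR : ∀ ξ : ℝ, ∀ t ≥ (0:ℝ), HasDerivAt (fun s => ft (g Cls.R s) ξ)
      ((γ : ℂ) * ft (g Cls.I t) ξ
        + collision lam μ (fun J => g J t) Cls.R ξ) t)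
    -- equal masses and equal mean wealths at all times
    (hmass : ∀ J, ∀ t ≥ (0:ℝ), (∫ w, f J t w) = ∫ w, g J t w)
    (hfmom : ∀ J, ∀ t ≥ (0:ℝ), Integrable (fun w => w * f J t w))
    (hgmom : ∀ J, ∀ t ≥ (0:ℝ), Integrable (fun w => w * g J t w))
    (hmom : ∀ J, ∀ t ≥ (0:ℝ), (∫ w, w * f J t w) = ∫ w, w * g J t w)
    -- finite initial distance
    (hfin : (∑ J : Cls, d2 (f J 0) (g J 0)) < ⊤) :
    ∀ t ≥ (0:ℝ), (∑ J : Cls, d2 (f J t) (g J t))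
      ≤ ENNReal.ofReal (Real.exp (-(1 - ν) * t)) * ∑ J : Cls, d2 (f J 0) (g J 0) := by
  intro T hT
  obtain ⟨hβ0, hβ1⟩ := hβ
  obtain ⟨hγ0, hγ1⟩ := hγ
  classical
  -- local definitions
  set φ : Cls → ℝ → ℝ → ℂ := fun H ξ s => ft (f H s) ξ - ft (g H s) ξ with hφdef
  set m : Cls → ℝ → ℝ := fun J s => ∫ w, f J s w with hmdef
  set II : Cls → Cls → ℝ := fun H J => ∫ η, (1 - lam H + η) ^ 2 ∂(μ H J) with hIIdef
  set KK : Cls → ℝ → ℝ → ℂ := fun H ξ s => ∑ J : Cls,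
    ((∫ η, ft (f H s) ((1 - lam H + η) * ξ) ∂(μ H J)) * ft (f J s) (lam J * ξ)
      - (∫ η, ft (g H s) ((1 - lam H + η) * ξ) ∂(μ H J)) * ft (g J s) (lam J * ξ)) with hKKdef
  -- mass facts
  have mnon : ∀ J s, 0 ≤ s → 0 ≤ m J s := fun J s hs => integral_nonneg (hfpos J s hs)
  have msum : ∀ s, 0 ≤ s → ∑ J : Cls, m J s = 1 := fun s hs => hfmass s hs
  have mle1 : ∀ J s, 0 ≤ s → m J s ≤ 1 := by
    intro J s hs
    rw [← msum s hs]
    exact Finset.single_le_sum (f := fun J => m J s) (fun i _ => mnon i s hs) (Finset.mem_univ J)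
  have gmass : ∀ J s, 0 ≤ s → (∫ w, g J s w) = m J s := fun J s hs => (hmass J s hs).symm
  have ftf_le : ∀ J ξ s, 0 ≤ s → ‖ft (f J s) ξ‖ ≤ m J s := fun J ξ s hs =>
    ft_norm_le (hfpos J s hs) ξ
  have ftg_le : ∀ J ξ s, 0 ≤ s → ‖ft (g J s) ξ‖ ≤ m J s := fun J ξ s hs =>
    (ft_norm_le (hgpos J s hs) ξ).trans (le_of_eq (gmass J s hs))
  have φbd2 : ∀ H ξ s, 0 ≤ s → ‖φ H ξ s‖ ≤ 2 := by
    intro H ξ s hs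
    calc ‖φ H ξ s‖ ≤ ‖ft (f H s) ξ‖ + ‖ft (g H s) ξ‖ := norm_sub_le _ _
      _ ≤ 2 := by
          have := ftf_le H ξ s hs; have := ftg_le H ξ s hs; have := mle1 H s hs; linarith
  have φ0 : ∀ H s, 0 ≤ s → φ H 0 s = 0 := by
    intro H s hs
    show ft (f H s) 0 - ft (g H s) 0 = 0
    rw [ft_zero, ft_zero, gmass H s hs, sub_self]
  -- ν facts
  have IInn : ∀ H J, 0 ≤ II H J := fun H J => integral_nonneg (fun η => sq_nonneg _)
  have νkey : ∀ H J, lam H ^ 2 + II H J ≤ ν := by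
    intro H J
    rw [hνdef]
    simp only [hIIdef]
    have step1 : lam H ^ 2 + (∫ η, (1 - lam H + η) ^ 2 ∂(μ H J))
        ≤ ⨆ J' : Cls, (lam J' ^ 2 + ∫ η, (1 - lam J' + η) ^ 2 ∂(μ J' J)) :=
      le_ciSup (f := fun J' : Cls => lam J' ^ 2 + ∫ η, (1 - lam J' + η) ^ 2 ∂(μ J' J))
        (Set.Finite.bddAbove (Set.finite_range _)) H
    have step2 : (⨆ J' : Cls, (lam J' ^ 2 + ∫ η, (1 - lam J' + η) ^ 2 ∂(μ J' J)))
        ≤ ⨆ H' : Cls, ⨆ J' : Cls, (lam J' ^ 2 + ∫ η, (1 - lam J' + η) ^ 2 ∂(μ J' H')) :=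
      le_ciSup (f := fun H' : Cls => ⨆ J' : Cls,
          (lam J' ^ 2 + ∫ η, (1 - lam J' + η) ^ 2 ∂(μ J' H')))
        (Set.Finite.bddAbove (Set.finite_range _)) J
    exact le_trans step1 step2
  have νnn : 0 ≤ ν :=
    le_trans (by positivity : (0:ℝ) ≤ lam Cls.S ^ 2 + II Cls.S Cls.S) (νkey Cls.S Cls.S)
  have lam2le : ∀ H, lam H ^ 2 ≤ 1 := fun H => by
    have := (hlam H).1; have := (hlam H).2; nlinarith
  have IIle1 : ∀ H J, II H J ≤ 1 := fun H J => by
    have := νkey H J; have := sq_nonneg (lam H); linarith [hν.le]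
  have IIint : ∀ H J, Integrable (fun η => (1 - lam H + η) ^ 2) (μ H J) := by
    intro H J
    haveI := hμprob H J
    have : (fun η : ℝ => (1 - lam H + η) ^ 2)
        = fun η => η ^ 2 + (2 * (1 - lam H)) * η + (1 - lam H) ^ 2 := by
      funext η; ring
    rw [this]
    exact ((hμint2 H J).add ((hμint H J).const_mul _)).add (integrable_const _)
  have ftfc : ∀ J s, 0 ≤ s → Continuous (ft (f J s)) := fun J s hs => ft_continuous (hfint J s hs)
  have ftgc : ∀ J s, 0 ≤ s → Continuous (ft (g J s)) := fun J s hs => ft_continuous (hgint J s hs)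
  -- bound on single collision-difference terms
  have termbound : ∀ (p : Cls → ℝ) (b : ℝ), (∀ J, 0 ≤ p J) → 0 ≤ b → ∀ s, 0 ≤ s →
      (∀ H' ζ, ‖φ H' ζ s‖ ≤ p H' * ζ ^ 2 + b) → ∀ H J ξ,
      ‖(∫ η, ft (f H s) ((1 - lam H + η) * ξ) ∂(μ H J)) * ft (f J s) (lam J * ξ)
        - (∫ η, ft (g H s) ((1 - lam H + η) * ξ) ∂(μ H J)) * ft (g J s) (lam J * ξ)‖
        ≤ (m J s * II H J * p H + m H s * lam J ^ 2 * p J) * ξ ^ 2 + b * (m J s + m H s) := by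
    intro p b hp hb s hs hφp H J ξ
    haveI := hμprob H J
    set Af := ∫ η, ft (f H s) ((1 - lam H + η) * ξ) ∂(μ H J) with hAf
    set Ag := ∫ η, ft (g H s) ((1 - lam H + η) * ξ) ∂(μ H J) with hAg
    set Bf := ft (f J s) (lam J * ξ) with hBf
    set Bg := ft (g J s) (lam J * ξ) with hBg
    have intf : Integrable (fun η => ft (f H s) ((1 - lam H + η) * ξ)) (μ H J) := by
      refine Integrable.mono' (integrable_const (1:ℝ)) ?_ ?_
      · exact ((ftfc H s hs).comp
          ((continuous_const.add continuous_id).mul continuous_const)).aestronglyMeasurable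
      · exact Filter.Eventually.of_forall fun η => (ftf_le H _ s hs).trans (mle1 H s hs)
    have intg : Integrable (fun η => ft (g H s) ((1 - lam H + η) * ξ)) (μ H J) := by
      refine Integrable.mono' (integrable_const (1:ℝ)) ?_ ?_
      · exact ((ftgc H s hs).comp
          ((continuous_const.add continuous_id).mul continuous_const)).aestronglyMeasurable
      · exact Filter.Eventually.of_forall fun η => (ftg_le H _ s hs).trans (mle1 H s hs)
    have hAsub : Af - Ag = ∫ η, φ H ((1 - lam H + η) * ξ) s ∂(μ H J) :=
      (integral_sub intf intg).symm
    have hA : ‖Af - Ag‖ ≤ p H * ξ ^ 2 * II H J + b := by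
      rw [hAsub]
      refine (norm_integral_le_integral_norm _).trans ?_
      have hpt : ∀ η : ℝ, ‖φ H ((1 - lam H + η) * ξ) s‖
          ≤ p H * ξ ^ 2 * (1 - lam H + η) ^ 2 + b := by
        intro η
        calc ‖φ H ((1 - lam H + η) * ξ) s‖ ≤ p H * ((1 - lam H + η) * ξ) ^ 2 + b := hφp H _
          _ = p H * ξ ^ 2 * (1 - lam H + η) ^ 2 + b := by ring
      calc ∫ η, ‖φ H ((1 - lam H + η) * ξ) s‖ ∂(μ H J)
          ≤ ∫ η, (p H * ξ ^ 2 * (1 - lam H + η) ^ 2 + b) ∂(μ H J) :=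
            integral_mono_of_nonneg (Filter.Eventually.of_forall fun η => norm_nonneg _)
              (((IIint H J).const_mul _).add (integrable_const b))
              (Filter.Eventually.of_forall hpt)
        _ = p H * ξ ^ 2 * II H J + b := by
            rw [integral_add ((IIint H J).const_mul _) (integrable_const b),
              integral_const_mul, integral_const]
            simp [measure_univ, hIIdef]
    have hBfle : ‖Bf‖ ≤ m J s := ftf_le J _ s hs
    have hAgle : ‖Ag‖ ≤ m H s := by
      refine (norm_integral_le_integral_norm _).trans ?_
      calc ∫ η, ‖ft (g H s) ((1 - lam H + η) * ξ)‖ ∂(μ H J)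
          ≤ ∫ η, m H s ∂(μ H J) :=
            integral_mono_of_nonneg (Filter.Eventually.of_forall fun η => norm_nonneg _)
              (integrable_const _) (Filter.Eventually.of_forall fun η => ftg_le H _ s hs)
        _ = m H s := by simp [measure_univ]
    have hBsub : ‖Bf - Bg‖ ≤ p J * lam J ^ 2 * ξ ^ 2 + b := by
      calc ‖Bf - Bg‖ = ‖φ J (lam J * ξ) s‖ := rfl
        _ ≤ p J * (lam J * ξ) ^ 2 + b := hφp J _
        _ = p J * lam J ^ 2 * ξ ^ 2 + b := by ring
    calc ‖Af * Bf - Ag * Bg‖ = ‖(Af - Ag) * Bf + Ag * (Bf - Bg)‖ := by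
          congr 1
          ring
      _ ≤ ‖(Af - Ag) * Bf‖ + ‖Ag * (Bf - Bg)‖ := norm_add_le _ _
      _ = ‖Af - Ag‖ * ‖Bf‖ + ‖Ag‖ * ‖Bf - Bg‖ := by rw [norm_mul, norm_mul]
      _ ≤ (p H * ξ ^ 2 * II H J + b) * m J s + m H s * (p J * lam J ^ 2 * ξ ^ 2 + b) := by
          refine add_le_add (mul_le_mul hA hBfle (norm_nonneg _) ?_)
            (mul_le_mul hAgle hBsub (norm_nonneg _) (mnon H s hs))
          have := hp H; have := IInn H J; positivity
      _ = (m J s * II H J * p H + m H s * lam J ^ 2 * p J) * ξ ^ 2 + b * (m J s + m H s) := by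
          ring
  -- bound on the collision difference
  have Kbound : ∀ (p : Cls → ℝ) (b : ℝ), (∀ J, 0 ≤ p J) → 0 ≤ b → ∀ s, 0 ≤ s →
      (∀ H' ζ, ‖φ H' ζ s‖ ≤ p H' * ζ ^ 2 + b) → ∀ H ξ,
      ‖KK H ξ s‖ ≤ (∑ J : Cls, (m J s * II H J * p H + m H s * lam J ^ 2 * p J)) * ξ ^ 2
        + 4 * b := by
    intro p b hp hb s hs hφp H ξ
    calc ‖KK H ξ s‖
        ≤ ∑ J : Cls, ‖(∫ η, ft (f H s) ((1 - lam H + η) * ξ) ∂(μ H J)) * ft (f J s) (lam J * ξ)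
            - (∫ η, ft (g H s) ((1 - lam H + η) * ξ) ∂(μ H J)) * ft (g J s) (lam J * ξ)‖ :=
          norm_sum_le _ _
      _ ≤ ∑ J : Cls, ((m J s * II H J * p H + m H s * lam J ^ 2 * p J) * ξ ^ 2
            + b * (m J s + m H s)) :=
          Finset.sum_le_sum (fun J _ => termbound p b hp hb s hs hφp H J ξ)
      _ = (∑ J : Cls, (m J s * II H J * p H + m H s * lam J ^ 2 * p J)) * ξ ^ 2
            + ∑ J : Cls, b * (m J s + m H s) := by
          rw [Finset.sum_add_distrib, Finset.sum_mul]
      _ ≤ (∑ J : Cls, (m J s * II H J * p H + m H s * lam J ^ 2 * p J)) * ξ ^ 2 + 4 * b := by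
          have h1 : ∑ J : Cls, m J s = 1 := msum s hs
          rw [Cls.sum_def] at h1
          rw [Cls.sum_def (fun J => b * (m J s + m H s))]
          have := mle1 H s hs
          have := mnon H s hs
          nlinarith
  -- derivative of φ
  set cc : Cls → ℝ → ℝ := fun H s => match H with
    | Cls.S => 1 + β * m Cls.I s
    | Cls.I => 1 + γ
    | Cls.R => 1 with hccdef
  set cross : Cls → ℝ → ℝ → ℂ := fun H ξ s => match H with
    | Cls.S => 0
    | Cls.I => ((β * m Cls.I s : ℝ) : ℂ) * φ Cls.S ξ s
    | Cls.R => ((γ : ℝ) : ℂ) * φ Cls.I ξ s with hcrossdef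
  have collDiff : ∀ H s, 0 ≤ s → ∀ ξ,
      collision lam μ (fun J => f J s) H ξ - collision lam μ (fun J => g J s) H ξ
        = KK H ξ s - φ H ξ s := by
    intro H s hs ξ
    unfold collision
    rw [← Finset.sum_sub_distrib]
    have heach : ∀ J : Cls,
        ((∫ η, ft (f H s) ((1 - lam H + η) * ξ) ∂(μ H J)) * ft (f J s) (lam J * ξ)
          - ((∫ w, f J s w : ℝ) : ℂ) * ft (f H s) ξ)
        - ((∫ η, ft (g H s) ((1 - lam H + η) * ξ) ∂(μ H J)) * ft (g J s) (lam J * ξ)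
          - ((∫ w, g J s w : ℝ) : ℂ) * ft (g H s) ξ)
        = ((∫ η, ft (f H s) ((1 - lam H + η) * ξ) ∂(μ H J)) * ft (f J s) (lam J * ξ)
          - (∫ η, ft (g H s) ((1 - lam H + η) * ξ) ∂(μ H J)) * ft (g J s) (lam J * ξ))
          - ((m J s : ℝ) : ℂ) * φ H ξ s := by
      intro J
      rw [gmass J s hs]
      show _ = _ - ((m J s : ℝ) : ℂ) * (ft (f H s) ξ - ft (g H s) ξ)
      ring
    rw [Finset.sum_congr rfl (fun J _ => heach J), Finset.sum_sub_distrib, ← Finset.sum_mul]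
    have hcast : (∑ J : Cls, ((m J s : ℝ) : ℂ)) = 1 := by
      rw [show (∑ J : Cls, ((m J s : ℝ) : ℂ)) = (((∑ J : Cls, m J s : ℝ)) : ℂ) by push_cast; rfl,
        msum s hs, Complex.ofReal_one]
    rw [hcast, one_mul]
  have dAll : ∀ H ξ s, 0 ≤ s → HasDerivAt (fun u => φ H ξ u)
      (-((cc H s : ℝ) : ℂ) * φ H ξ s + (cross H ξ s + KK H ξ s)) s := by
    intro H ξ s hs
    have hmi : ((∫ w, g Cls.I s w : ℝ) : ℂ) = ((m Cls.I s : ℝ) : ℂ) := by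
      rw [gmass Cls.I s hs]
    cases H with
    | S =>
      have h : HasDerivAt (fun u => φ Cls.S ξ u) _ s := (hfS ξ s hs).sub (hgS ξ s hs)
      have e1 := collDiff Cls.S s hs ξ
      convert h using 1
      rw [hmi]
      show -((1 + β * m Cls.I s : ℝ) : ℂ) * φ Cls.S ξ s + ((0 : ℂ) + KK Cls.S ξ s)
        = -(β : ℂ) * ((m Cls.I s : ℝ) : ℂ) * ft (f Cls.S s) ξ
            + collision lam μ (fun J => f J s) Cls.S ξ
          - (-(β : ℂ) * ((m Cls.I s : ℝ) : ℂ) * ft (g Cls.S s) ξ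
            + collision lam μ (fun J => g J s) Cls.S ξ)
      have hφS : φ Cls.S ξ s = ft (f Cls.S s) ξ - ft (g Cls.S s) ξ := rfl
      push_cast
      linear_combination -e1 - (β : ℂ) * ((m Cls.I s : ℝ) : ℂ) * hφS
    | I =>
      have h : HasDerivAt (fun u => φ Cls.I ξ u) _ s := (hfI ξ s hs).sub (hgI ξ s hs)
      have e1 := collDiff Cls.I s hs ξ
      convert h using 1
      rw [hmi]
      show -((1 + γ : ℝ) : ℂ) * φ Cls.I ξ s
          + (((β * m Cls.I s : ℝ) : ℂ) * φ Cls.S ξ s + KK Cls.I ξ s)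
        = (β : ℂ) * ((m Cls.I s : ℝ) : ℂ) * ft (f Cls.S s) ξ - (γ : ℂ) * ft (f Cls.I s) ξ
            + collision lam μ (fun J => f J s) Cls.I ξ
          - ((β : ℂ) * ((m Cls.I s : ℝ) : ℂ) * ft (g Cls.S s) ξ - (γ : ℂ) * ft (g Cls.I s) ξ
            + collision lam μ (fun J => g J s) Cls.I ξ)
      have hφS : φ Cls.S ξ s = ft (f Cls.S s) ξ - ft (g Cls.S s) ξ := rfl
      have hφI : φ Cls.I ξ s = ft (f Cls.I s) ξ - ft (g Cls.I s) ξ := rfl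
      push_cast
      linear_combination -e1 + (β : ℂ) * ((m Cls.I s : ℝ) : ℂ) * hφS - (γ : ℂ) * hφI
    | R =>
      have h : HasDerivAt (fun u => φ Cls.R ξ u) _ s := (hfR ξ s hs).sub (hgR ξ s hs)
      have e1 := collDiff Cls.R s hs ξ
      convert h using 1
      show -((1 : ℝ) : ℂ) * φ Cls.R ξ s + (((γ : ℝ) : ℂ) * φ Cls.I ξ s + KK Cls.R ξ s)
        = (γ : ℂ) * ft (f Cls.I s) ξ + collision lam μ (fun J => f J s) Cls.R ξ
          - ((γ : ℂ) * ft (g Cls.I s) ξ + collision lam μ (fun J => g J s) Cls.R ξ)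
      have hφI : φ Cls.I ξ s = ft (f Cls.I s) ξ - ft (g Cls.I s) ξ := rfl
      have hφR : φ Cls.R ξ s = ft (f Cls.R s) ξ - ft (g Cls.R s) ξ := rfl
      push_cast
      linear_combination -e1 + (γ : ℂ) * hφI
  -- norm bound for the derivative
  have ccbd : ∀ H s, 0 ≤ s → 0 ≤ cc H s ∧ cc H s ≤ 2 := by
    intro H s hs
    have h1 := mnon Cls.I s hs
    have h2 := mle1 Cls.I s hs
    cases H
    · constructor
      · show (0:ℝ) ≤ 1 + β * m Cls.I s
        nlinarith
      · show (1:ℝ) + β * m Cls.I s ≤ 2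
        nlinarith
    · constructor
      · show (0:ℝ) ≤ 1 + γ
        linarith
      · show (1:ℝ) + γ ≤ 2
        linarith
    · constructor
      · show (0:ℝ) ≤ 1
        norm_num
      · show (1:ℝ) ≤ 2
        norm_num
  have Dbound : ∀ (p b : ℝ), 0 ≤ p → 0 ≤ b → ∀ s, 0 ≤ s →
      (∀ H' ζ, ‖φ H' ζ s‖ ≤ p * ζ ^ 2 + b) → ∀ H ξ,
      ‖-((cc H s : ℝ) : ℂ) * φ H ξ s + (cross H ξ s + KK H ξ s)‖ ≤ 9 * (p * ξ ^ 2 + b) := by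
    intro p b hp hb s hs hφp H ξ
    have hKK : ‖KK H ξ s‖ ≤ 6 * p * ξ ^ 2 + 4 * b := by
      have h0 := Kbound (fun _ => p) b (fun _ => hp) hb s hs hφp H ξ
      refine h0.trans ?_
      have hsum : (∑ J : Cls, (m J s * II H J * p + m H s * lam J ^ 2 * p)) ≤ 6 * p := by
        have he : ∀ J : Cls, m J s * II H J * p + m H s * lam J ^ 2 * p ≤ 2 * p := by
          intro J
          have a1 := mnon J s hs; have a2 := mle1 J s hs
          have a3 := mnon H s hs; have a4 := mle1 H s hs
          have a5 := IInn H J; have a6 := IIle1 H J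
          have a7 := lam2le J; have a8 := sq_nonneg (lam J)
          have e1 : m J s * II H J * p ≤ p := by
            have hx : m J s * II H J ≤ 1 := mul_le_one₀ a2 a5 a6
            nlinarith [mul_le_mul_of_nonneg_right hx hp]
          have e2 : m H s * lam J ^ 2 * p ≤ p := by
            have hx : m H s * lam J ^ 2 ≤ 1 := mul_le_one₀ a4 a8 a7
            nlinarith [mul_le_mul_of_nonneg_right hx hp]
          linarith
        calc (∑ J : Cls, (m J s * II H J * p + m H s * lam J ^ 2 * p))
            ≤ ∑ _J : Cls, 2 * p := Finset.sum_le_sum (fun J _ => he J)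
          _ = 6 * p := by rw [Cls.sum_def]; ring
      nlinarith [sq_nonneg ξ]
    have hφb : ‖φ H ξ s‖ ≤ p * ξ ^ 2 + b := hφp H ξ
    have hcrossb : ‖cross H ξ s‖ ≤ p * ξ ^ 2 + b := by
      have hpb : 0 ≤ p * ξ ^ 2 + b := by positivity
      have h1 := mnon Cls.I s hs
      have h2 := mle1 Cls.I s hs
      cases H
      · show ‖(0:ℂ)‖ ≤ p * ξ ^ 2 + b
        simpa using hpb
      · show ‖((β * m Cls.I s : ℝ) : ℂ) * φ Cls.S ξ s‖ ≤ p * ξ ^ 2 + b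
        rw [norm_mul, Complex.norm_real, Real.norm_eq_abs,
          abs_of_nonneg (mul_nonneg hβ0.le h1)]
        have hφS := hφp Cls.S ξ
        have hb1 : β * m Cls.I s ≤ 1 := by nlinarith
        calc β * m Cls.I s * ‖φ Cls.S ξ s‖ ≤ 1 * (p * ξ ^ 2 + b) :=
              mul_le_mul hb1 hφS (norm_nonneg _) zero_le_one
          _ = p * ξ ^ 2 + b := one_mul _
      · show ‖((γ : ℝ) : ℂ) * φ Cls.I ξ s‖ ≤ p * ξ ^ 2 + b
        rw [norm_mul, Complex.norm_real, Real.norm_eq_abs, abs_of_nonneg hγ0.le]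
        have hφI := hφp Cls.I ξ
        calc γ * ‖φ Cls.I ξ s‖ ≤ 1 * (p * ξ ^ 2 + b) :=
              mul_le_mul hγ1.le hφI (norm_nonneg _) zero_le_one
          _ = p * ξ ^ 2 + b := one_mul _
    have hccn : ‖-((cc H s : ℝ) : ℂ) * φ H ξ s‖ ≤ 2 * (p * ξ ^ 2 + b) := by
      rw [norm_mul, norm_neg, Complex.norm_real, Real.norm_eq_abs,
        abs_of_nonneg (ccbd H s hs).1]
      have h2 := (ccbd H s hs).2
      nlinarith [norm_nonneg (φ H ξ s), (ccbd H s hs).1]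
    calc ‖-((cc H s : ℝ) : ℂ) * φ H ξ s + (cross H ξ s + KK H ξ s)‖
        ≤ ‖-((cc H s : ℝ) : ℂ) * φ H ξ s‖ + (‖cross H ξ s‖ + ‖KK H ξ s‖) :=
          (norm_add_le _ _).trans (by gcongr; exact norm_add_le _ _)
      _ ≤ 9 * (p * ξ ^ 2 + b) := by nlinarith [sq_nonneg ξ]
  -- short-time crude doubling estimate
  have crude : ∀ C : ℝ, 0 ≤ C → ∀ t₀ : ℝ, 0 ≤ t₀ → (∀ H ξ, ‖φ H ξ t₀‖ ≤ C * ξ ^ 2) →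
      ∀ H ξ, ∀ s ∈ Icc t₀ (t₀ + 1/18), ‖φ H ξ s‖ ≤ 2 * C * ξ ^ 2 := by
    intro C hC t₀ ht₀ hinit
    have Q : ∀ n : ℕ, ∀ H ξ, ∀ s ∈ Icc t₀ (t₀ + 1/18),
        ‖φ H ξ s‖ ≤ 2 * C * ξ ^ 2 + 2 * (1/2) ^ n := by
      intro n
      induction n with
      | zero =>
        intro H ξ s hs
        have := φbd2 H ξ s (le_trans ht₀ hs.1)
        have : (0:ℝ) ≤ 2 * C * ξ ^ 2 := by positivity
        simp only [pow_zero]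
        linarith [φbd2 H ξ s (le_trans ht₀ hs.1)]
      | succ n ih =>
        intro H ξ s hs
        have hder : ∀ x ∈ Icc t₀ s, HasDerivWithinAt (fun u => φ H ξ u)
            ((fun x => -((cc H x : ℝ) : ℂ) * φ H ξ x + (cross H ξ x + KK H ξ x)) x)
            (Icc t₀ s) x := fun x hx =>
          (dAll H ξ x (le_trans ht₀ hx.1)).hasDerivWithinAt
        have hbound : ∀ x ∈ Ico t₀ s,
            ‖-((cc H x : ℝ) : ℂ) * φ H ξ x + (cross H ξ x + KK H ξ x)‖
              ≤ 9 * (2 * C * ξ ^ 2 + 2 * (1/2) ^ n) := by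
          intro x hx
          exact Dbound (2 * C) (2 * (1/2) ^ n) (by linarith) (by positivity) x
            (le_trans ht₀ hx.1)
            (fun H' ζ => ih H' ζ x ⟨hx.1, le_trans hx.2.le hs.2⟩) H ξ
        have hmvt := norm_image_sub_le_of_norm_deriv_le_segment' hder hbound s
          ⟨hs.1, le_refl s⟩
        have hst : s - t₀ ≤ 1/18 := by linarith [hs.2]
        have h1 : ‖φ H ξ s‖ ≤ ‖φ H ξ t₀‖ + ‖φ H ξ s - φ H ξ t₀‖ := by
          have := norm_sub_norm_le (φ H ξ s) (φ H ξ t₀)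
          linarith [norm_sub_le (φ H ξ s) (φ H ξ t₀)]
        have h2 : (0:ℝ) ≤ 9 * (2 * C * ξ ^ 2 + 2 * (1/2) ^ n) := by positivity
        have h3 : ‖φ H ξ s - φ H ξ t₀‖ ≤ 9 * (2 * C * ξ ^ 2 + 2 * (1/2) ^ n) * (1/18) := by
          refine hmvt.trans ?_
          have := sub_nonneg.mpr hs.1
          gcongr
        have h4 := hinit H ξ
        have hpow : ((1:ℝ)/2) ^ (n + 1) = (1/2) ^ n * (1/2) := pow_succ _ _
        rw [hpow]
        nlinarith
    intro H ξ s hs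
    have hlim : Tendsto (fun n : ℕ => 2 * C * ξ ^ 2 + 2 * (1/2 : ℝ) ^ n) atTop
        (𝓝 (2 * C * ξ ^ 2 + 2 * 0)) := by
      refine tendsto_const_nhds.add (Tendsto.const_mul _ ?_)
      exact tendsto_pow_atTop_nhds_zero_of_lt_one (by norm_num) (by norm_num)
    have := ge_of_tendsto hlim (Filter.Eventually.of_forall fun n => Q n H ξ s hs)
    linarith [this]
  -- initial bound
  set D0 : ℝ := (∑ J : Cls, d2 (f J 0) (g J 0)).toReal with hD0def
  have D0nn : 0 ≤ D0 := ENNReal.toReal_nonneg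
  have d2fin0 : ∀ H : Cls, d2 (f H 0) (g H 0) ≠ ⊤ := by
    intro H
    have h1 : d2 (f H 0) (g H 0) ≤ ∑ J : Cls, d2 (f J 0) (g J 0) :=
      Finset.single_le_sum (f := fun J => d2 (f J 0) (g J 0)) (fun i _ => zero_le)
        (Finset.mem_univ H)
    exact (lt_of_le_of_lt h1 hfin).ne
  have init : ∀ H ξ, ‖φ H ξ 0‖ ≤ D0 * ξ ^ 2 := by
    intro H ξ
    by_cases hξ : ξ = 0
    · subst hξ
      rw [φ0 H 0 le_rfl]
      simp
    · have h1 := d2_ge (F := f H 0) (G := g H 0) (d2fin0 H) hξ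
      refine h1.trans ?_
      have h2 : (d2 (f H 0) (g H 0)).toReal ≤ D0 := by
        refine ENNReal.toReal_mono hfin.ne ?_
        exact Finset.single_le_sum (f := fun J => d2 (f J 0) (g J 0)) (fun i _ => zero_le)
          (Finset.mem_univ H)
      nlinarith [sq_nonneg ξ]
  -- global bound on [0, T]
  have global : ∀ k : ℕ, ∀ s ∈ Icc (0:ℝ) (k * (1/18)), ∀ H ξ,
      ‖φ H ξ s‖ ≤ 2 ^ k * D0 * ξ ^ 2 := by
    intro k
    induction k with
    | zero =>
      intro s hs H ξ
      have hs0 : s = 0 := le_antisymm (by simpa using hs.2) hs.1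
      subst hs0
      simpa using init H ξ
    | succ k ih =>
      intro s hs H ξ
      by_cases hc : s ≤ k * (1/18)
      · have h1 := ih s ⟨hs.1, hc⟩ H ξ
        refine h1.trans ?_
        have : (2:ℝ) ^ k ≤ 2 ^ (k + 1) := by
          rw [pow_succ]
          nlinarith [pow_pos (show (0:ℝ) < 2 by norm_num) k]
        exact mul_le_mul_of_nonneg_right (mul_le_mul_of_nonneg_right this D0nn) (sq_nonneg ξ)
      · push_neg at hc
        have hk0 : (0:ℝ) ≤ k * (1/18) := by positivity
        have happ := crude (2 ^ k * D0) (by positivity) (k * (1/18)) hk0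
          (fun H' ξ' => ih (k * (1/18)) ⟨hk0, le_refl _⟩ H' ξ') H ξ s
          ⟨hc.le, by push_cast at hs ⊢; linarith [hs.2]⟩
        refine happ.trans (le_of_eq ?_)
        rw [pow_succ]
        ring
  obtain ⟨k, hk⟩ : ∃ k : ℕ, 18 * T ≤ k := exists_nat_ge _
  have hTk : T ≤ k * (1/18) := by linarith
  set MT : ℝ := 2 ^ k * D0 with hMTdef
  have MTnn : 0 ≤ MT := by positivity
  have bnd : ∀ H ξ s, s ∈ Icc (0:ℝ) T → ‖φ H ξ s‖ ≤ MT * ξ ^ 2 :=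
    fun H ξ s hs => global k s ⟨hs.1, hs.2.trans hTk⟩ H ξ
  -- the (finite) d2-distances as real functions
  have d2fin : ∀ H s, s ∈ Icc (0:ℝ) T → d2 (f H s) (g H s) ≠ ⊤ := by
    intro H s hs
    have h1 : d2 (f H s) (g H s) ≤ ENNReal.ofReal MT :=
      d2_le MTnn (fun ξ _ => bnd H ξ s hs)
    exact (lt_of_le_of_lt h1 ENNReal.ofReal_lt_top).ne
  set h : Cls → ℝ → ℝ := fun H s => (d2 (f H s) (g H s)).toReal with hhdef
  have hnn : ∀ H s, 0 ≤ h H s := fun H s => ENNReal.toReal_nonneg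
  have hle : ∀ H ξ s, s ∈ Icc (0:ℝ) T → ‖φ H ξ s‖ ≤ h H s * ξ ^ 2 := by
    intro H ξ s hs
    by_cases hξ : ξ = 0
    · subst hξ
      rw [φ0 H s hs.1]
      simp
    · exact d2_ge (d2fin H s hs) hξ
  have hle' : ∀ H s (c : ℝ), 0 ≤ c → (∀ ξ : ℝ, ξ ≠ 0 → ‖φ H ξ s‖ ≤ c * ξ ^ 2) → h H s ≤ c :=
    fun H s c hc hb => d2_toReal_le hc hb
  have hMT : ∀ H s, s ∈ Icc (0:ℝ) T → h H s ≤ MT :=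
    fun H s hs => hle' H s MT MTnn (fun ξ _ => bnd H ξ s hs)
  -- continuity of masses
  have mre : ∀ J u, m J u = (ft (f J u) 0).re := by
    intro J u
    rw [ft_zero]
    exact (Complex.ofReal_re _).symm
  have mcont : ∀ J s, 0 ≤ s → ContinuousAt (m J) s := by
    intro J s hs
    have h1 : ContinuousAt (fun u => ft (f J u) 0) s := by
      cases J
      · exact (hfS 0 s hs).continuousAt
      · exact (hfI 0 s hs).continuousAt
      · exact (hfR 0 s hs).continuousAt
    have h2 : (fun u => m J u) = fun u => (ft (f J u) 0).re := funext (mre J)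
    rw [show m J = fun u => (ft (f J u) 0).re from funext (mre J)]
    exact Complex.continuous_re.continuousAt.comp h1
  -- Lipschitz continuity of h on [0, T]
  have key2 : ∀ H ξ s₁ s₂, 0 ≤ s₁ → s₁ ≤ s₂ → s₂ ≤ T →
      ‖φ H ξ s₂ - φ H ξ s₁‖ ≤ 9 * MT * ξ ^ 2 * (s₂ - s₁) := by
    intro H ξ s₁ s₂ h1 h2 h3
    have hder : ∀ x ∈ Icc s₁ s₂, HasDerivWithinAt (fun u => φ H ξ u)
        ((fun x => -((cc H x : ℝ) : ℂ) * φ H ξ x + (cross H ξ x + KK H ξ x)) x)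
        (Icc s₁ s₂) x := fun x hx => (dAll H ξ x (le_trans h1 hx.1)).hasDerivWithinAt
    have hbound : ∀ x ∈ Ico s₁ s₂,
        ‖-((cc H x : ℝ) : ℂ) * φ H ξ x + (cross H ξ x + KK H ξ x)‖ ≤ 9 * (MT * ξ ^ 2) := by
      intro x hx
      have hx0 : x ∈ Icc (0:ℝ) T := ⟨le_trans h1 hx.1, le_trans hx.2.le h3⟩
      have := Dbound MT 0 MTnn le_rfl x hx0.1
        (fun H' ζ => by simpa using bnd H' ζ x hx0) H ξ
      simpa using this
    have := norm_image_sub_le_of_norm_deriv_le_segment' hder hbound s₂ ⟨h2, le_refl _⟩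
    calc ‖φ H ξ s₂ - φ H ξ s₁‖ ≤ 9 * (MT * ξ ^ 2) * (s₂ - s₁) := this
      _ = 9 * MT * ξ ^ 2 * (s₂ - s₁) := by ring
  have hlip : ∀ H, ∀ x ∈ Icc (0:ℝ) T, ∀ y ∈ Icc (0:ℝ) T, x ≤ y →
      |h H y - h H x| ≤ 9 * MT * (y - x) := by
    intro H x hx y hy hxy
    have k1 : ∀ ξ : ℝ, ξ ≠ 0 → ‖φ H ξ y‖ ≤ (h H x + 9 * MT * (y - x)) * ξ ^ 2 := by
      intro ξ _
      have := key2 H ξ x y hx.1 hxy hy.2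
      have h4 := hle H ξ x hx
      calc ‖φ H ξ y‖ ≤ ‖φ H ξ x‖ + ‖φ H ξ y - φ H ξ x‖ := by
            have := norm_sub_norm_le (φ H ξ y) (φ H ξ x)
            linarith [norm_sub_le (φ H ξ y) (φ H ξ x)]
        _ ≤ h H x * ξ ^ 2 + 9 * MT * ξ ^ 2 * (y - x) := by linarith
        _ = (h H x + 9 * MT * (y - x)) * ξ ^ 2 := by ring
    have k2 : ∀ ξ : ℝ, ξ ≠ 0 → ‖φ H ξ x‖ ≤ (h H y + 9 * MT * (y - x)) * ξ ^ 2 := by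
      intro ξ _
      have := key2 H ξ x y hx.1 hxy hy.2
      have h4 := hle H ξ y hy
      calc ‖φ H ξ x‖ ≤ ‖φ H ξ y‖ + ‖φ H ξ y - φ H ξ x‖ := by
            have := norm_sub_norm_le (φ H ξ x) (φ H ξ y)
            have heq : ‖φ H ξ x - φ H ξ y‖ = ‖φ H ξ y - φ H ξ x‖ := norm_sub_rev _ _
            linarith [norm_sub_le (φ H ξ x) (φ H ξ y)]
        _ ≤ h H y * ξ ^ 2 + 9 * MT * ξ ^ 2 * (y - x) := by linarith
        _ = (h H y + 9 * MT * (y - x)) * ξ ^ 2 := by ring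
    have hyx : 0 ≤ y - x := by linarith
    have b1 : h H y ≤ h H x + 9 * MT * (y - x) :=
      hle' H y _ (by positivity) k1
    have b2 : h H x ≤ h H y + 9 * MT * (y - x) :=
      hle' H x _ (by positivity) k2
    rw [abs_le]
    constructor <;> nlinarith
  have hcont : ∀ H, ContinuousOn (h H) (Icc (0:ℝ) T) := by
    intro H
    apply LipschitzOnWith.continuousOn (K := Real.toNNReal (9 * MT))
    apply LipschitzOnWith.of_dist_le_mul
    intro x hx y hy
    rw [Real.dist_eq, Real.dist_eq, Real.coe_toNNReal _ (by positivity)]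
    rcases le_total x y with hxy | hxy
    · have := hlip H x hx y hy hxy
      rw [abs_sub_comm]
      calc |h H y - h H x| ≤ 9 * MT * (y - x) := this
        _ ≤ 9 * MT * |x - y| := by
            rw [abs_sub_comm, abs_of_nonneg (by linarith)]
    · have := hlip H y hy x hx hxy
      calc |h H x - h H y| ≤ 9 * MT * (x - y) := this
        _ ≤ 9 * MT * |x - y| := by rw [abs_of_nonneg (by linarith)]
  -- the kk functions
  set kk : Cls → ℝ → ℝ := fun H s =>
    ∑ J : Cls, (m J s * II H J * h H s + m H s * lam J ^ 2 * h J s) with hkkdef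
  have kknn : ∀ H s, 0 ≤ s → 0 ≤ kk H s := by
    intro H s hs
    apply Finset.sum_nonneg
    intro J _
    have := mnon J s hs; have := mnon H s hs; have := IInn H J
    have := hnn H s; have := hnn J s; have := sq_nonneg (lam J)
    positivity
  have kkbound : ∀ H ξ s, s ∈ Icc (0:ℝ) T → ‖KK H ξ s‖ ≤ kk H s * ξ ^ 2 := by
    intro H ξ s hs
    have h0 := Kbound (fun H' => h H' s) 0 (fun H' => hnn H' s) le_rfl s hs.1
      (fun H' ζ => by simpa using hle H' ζ s hs) H ξ
    simpa using h0
  have kkcont : ∀ H, ContinuousOn (kk H) (Icc (0:ℝ) T) := by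
    intro H
    apply continuousOn_finset_sum
    intro J _
    have hm : ∀ J' : Cls, ContinuousOn (m J') (Icc (0:ℝ) T) :=
      fun J' x hx => (mcont J' x hx.1).continuousWithinAt
    exact (((hm J).mul continuousOn_const).mul (hcont H)).add
      (((hm H).mul continuousOn_const).mul (hcont J))
  have kksum : ∀ s, s ∈ Icc (0:ℝ) T → ∑ H : Cls, kk H s ≤ ν * ∑ H : Cls, h H s := by
    intro s hs
    have e0 : ∀ H : Cls, kk H s = (∑ J : Cls, m J s * II H J) * h H s
        + m H s * (∑ J : Cls, lam J ^ 2 * h J s) := by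
      intro H
      rw [hkkdef]
      simp only []
      rw [Finset.sum_add_distrib, Finset.sum_mul, Finset.mul_sum]
      congr 1
      exact Finset.sum_congr rfl fun J _ => by ring
    have e1 : ∀ H : Cls, (∑ J : Cls, m J s * II H J) ≤ ν - lam H ^ 2 := by
      intro H
      calc (∑ J : Cls, m J s * II H J) ≤ ∑ J : Cls, m J s * (ν - lam H ^ 2) := by
            refine Finset.sum_le_sum fun J _ => ?_
            have := νkey H J
            have := mnon J s hs.1
            nlinarith [IInn H J]
        _ = (∑ J : Cls, m J s) * (ν - lam H ^ 2) := (Finset.sum_mul _ _ _).symm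
        _ = ν - lam H ^ 2 := by rw [msum s hs.1, one_mul]
    have e2 : ∑ H : Cls, m H s * (∑ J : Cls, lam J ^ 2 * h J s)
        = ∑ J : Cls, lam J ^ 2 * h J s := by
      rw [← Finset.sum_mul, msum s hs.1, one_mul]
    calc ∑ H : Cls, kk H s
        = ∑ H : Cls, ((∑ J : Cls, m J s * II H J) * h H s)
          + ∑ H : Cls, m H s * (∑ J : Cls, lam J ^ 2 * h J s) := by
          rw [← Finset.sum_add_distrib]
          exact Finset.sum_congr rfl fun H _ => e0 H
      _ ≤ ∑ H : Cls, ((ν - lam H ^ 2) * h H s) + ∑ J : Cls, lam J ^ 2 * h J s := by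
          rw [e2]
          exact add_le_add (Finset.sum_le_sum
            (fun H _ => mul_le_mul_of_nonneg_right (e1 H) (hnn H s))) le_rfl
      _ = ν * ∑ H : Cls, h H s := by
          rw [Finset.mul_sum, ← Finset.sum_add_distrib]
          exact Finset.sum_congr rfl fun H _ => by ring
  -- generic eventual-slope estimate for h H
  have evgen : ∀ (H : Cls) (c σf : ℝ → ℝ) (κ : ℝ → ℝ → ℂ),
      ContinuousOn c (Icc (0:ℝ) T) → ContinuousOn σf (Icc (0:ℝ) T) →
      (∀ s, s ∈ Icc (0:ℝ) T → 0 ≤ c s) → (∀ s, s ∈ Icc (0:ℝ) T → 0 ≤ σf s) →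
      (∀ ξ s, s ∈ Icc (0:ℝ) T →
        HasDerivAt (fun u => φ H ξ u) (-((c s : ℝ) : ℂ) * φ H ξ s + κ ξ s) s) →
      (∀ ξ s, s ∈ Icc (0:ℝ) T → ‖κ ξ s‖ ≤ σf s * ξ ^ 2) →
      ∀ t₀, t₀ ∈ Ico (0:ℝ) T → ∀ r, -(c t₀) * h H t₀ + σf t₀ < r →
        ∀ᶠ z in 𝓝[>] t₀, (z - t₀)⁻¹ * (h H z - h H t₀) < r := by
    intro H c σf κ hcC hσC hc0 hσ0 hder hκ t₀ ht₀ r hr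
    obtain ⟨ht₀0, ht₀T⟩ := ht₀
    have ht₀mem : t₀ ∈ Icc (0:ℝ) T := ⟨ht₀0, ht₀T.le⟩
    set ρ : ℝ := r - (-(c t₀) * h H t₀ + σf t₀) with hρdef
    have ρpos : 0 < ρ := by rw [hρdef]; linarith
    set ε : ℝ := ρ / (2 * (MT + 2)) with hεdef
    have εpos : 0 < ε := by
      rw [hεdef]
      have : 0 < 2 * (MT + 2) := by linarith
      positivity
    have hct : ContinuousWithinAt c (Icc 0 T) t₀ := hcC.continuousWithinAt ht₀mem
    have hσt : ContinuousWithinAt σf (Icc 0 T) t₀ := hσC.continuousWithinAt ht₀mem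
    rw [Metric.continuousWithinAt_iff] at hct hσt
    obtain ⟨δ₁, hδ₁0, hδ₁⟩ := hct ε εpos
    obtain ⟨δ₂, hδ₂0, hδ₂⟩ := hσt ε εpos
    set δ : ℝ := min (min δ₁ δ₂ / 2) (T - t₀) with hδdef
    have hδ0 : 0 < δ := lt_min (by positivity) (by linarith)
    have hsub : Icc t₀ (t₀ + δ) ⊆ Icc (0:ℝ) T := by
      intro x hx
      have h1 : δ ≤ T - t₀ := min_le_right _ _
      exact ⟨by linarith [hx.1], by linarith [hx.2]⟩
    have hprop : ∀ x ∈ Icc t₀ (t₀ + δ), c t₀ - ε ≤ c x ∧ σf x ≤ σf t₀ + ε := by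
      intro x hx
      have hxm : x ∈ Icc (0:ℝ) T := hsub hx
      have hd : dist x t₀ < min δ₁ δ₂ := by
        rw [Real.dist_eq, abs_of_nonneg (by linarith [hx.1])]
        have h1 : δ ≤ min δ₁ δ₂ / 2 := min_le_left _ _
        have h2 : 0 < min δ₁ δ₂ := lt_min hδ₁0 hδ₂0
        have := hx.2
        linarith
      constructor
      · have := hδ₁ hxm (lt_of_lt_of_le hd (min_le_left _ _))
        rw [Real.dist_eq, abs_lt] at this
        linarith [this.1]
      · have := hδ₂ hxm (lt_of_lt_of_le hd (min_le_right _ _))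
        rw [Real.dist_eq, abs_lt] at this
        linarith [this.2]
    set K' : ℝ := -(c t₀ - ε) with hK'def
    set ε' : ℝ := σf t₀ + ε with hε'def
    have ε'0 : 0 ≤ ε' := by
      have := hσ0 t₀ ht₀mem
      rw [hε'def]
      linarith
    have grb : ∀ ξ : ℝ, ∀ z ∈ Icc t₀ (t₀ + δ),
        ‖φ H ξ z‖ ≤ gronwallBound (h H t₀ * ξ ^ 2) K' (ε' * ξ ^ 2) (z - t₀) := by
      intro ξ
      apply le_gronwallBound_of_liminf_deriv_right_le
        (f' := fun z => K' * ‖φ H ξ z‖ + ε' * ξ ^ 2)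
      · exact fun z hz => ((hder ξ z (hsub hz)).continuousAt.norm).continuousWithinAt
      · intro x hx r' hr'
        have hxm : x ∈ Icc (0:ℝ) T := hsub ⟨hx.1, hx.2.le⟩
        have hp := hprop x ⟨hx.1, hx.2.le⟩
        have hlt : -(c x) * ‖φ H ξ x‖ + ‖κ ξ x‖ < r' := by
          have h1 : -(c x) * ‖φ H ξ x‖ ≤ K' * ‖φ H ξ x‖ := by
            apply mul_le_mul_of_nonneg_right _ (norm_nonneg _)
            rw [hK'def]
            linarith [hp.1]
          have h2 : ‖κ ξ x‖ ≤ ε' * ξ ^ 2 := by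
            refine (hκ ξ x hxm).trans ?_
            have := hp.2
            nlinarith [sq_nonneg ξ]
          linarith
        exact (norm_slope_lt (hc0 x hxm) (hder ξ x hxm) hlt).frequently
      · exact hle H ξ t₀ ht₀mem
      · exact fun x _ => le_refl _
    have hmain : ∀ z ∈ Icc t₀ (t₀ + δ), h H z ≤ gronwallBound (h H t₀) K' ε' (z - t₀) := by
      intro z hz
      have gnn : 0 ≤ gronwallBound (h H t₀) K' ε' (z - t₀) :=
        gB_nonneg (hnn H t₀) ε'0 (by linarith [hz.1])
      refine hle' H z _ gnn ?_
      intro ξ _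
      have := grb ξ z hz
      rwa [gB_smul (h H t₀) K' ε' (z - t₀) (ξ ^ 2)] at this
    have hKδ : K' * h H t₀ + ε' < r := by
      have hh : h H t₀ ≤ MT := hMT H t₀ ht₀mem
      have he1 : K' * h H t₀ + ε' = -(c t₀) * h H t₀ + σf t₀ + ε * (h H t₀ + 1) := by
        rw [hK'def, hε'def]; ring
      have he2 : ε * (h H t₀ + 1) ≤ ρ / 2 := by
        rw [hεdef]
        rw [div_mul_eq_mul_div, div_le_div_iff₀ (by linarith) (by norm_num)]
        nlinarith [hnn H t₀]
      rw [he1]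
      rw [hρdef] at he2
      linarith
    have hev := gB_slope_eventually (δ := h H t₀) (K := K') (ε := ε') (t₀ := t₀) hKδ
    have hIoc : Ioc t₀ (t₀ + δ) ∈ 𝓝[>] t₀ :=
      Ioc_mem_nhdsGT_of_mem ⟨le_refl _, by linarith⟩
    filter_upwards [hev, hIoc] with z h1 h2
    have hz0 : 0 < z - t₀ := by linarith [h2.1]
    have h3 : h H z - h H t₀ ≤ gronwallBound (h H t₀) K' ε' (z - t₀) - h H t₀ := by
      have := hmain z ⟨h2.1.le, h2.2⟩
      linarith
    calc (z - t₀)⁻¹ * (h H z - h H t₀)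
        ≤ (z - t₀)⁻¹ * (gronwallBound (h H t₀) K' ε' (z - t₀) - h H t₀) :=
          mul_le_mul_of_nonneg_left h3 (by positivity)
      _ < r := h1
  -- continuity of masses on [0,T]
  have hmC : ∀ J : Cls, ContinuousOn (m J) (Icc (0:ℝ) T) :=
    fun J x hx => (mcont J x hx.1).continuousWithinAt
  -- instantiate the slope estimates for the three classes
  have evS : ∀ t₀, t₀ ∈ Ico (0:ℝ) T → ∀ r,
      -(1 + β * m Cls.I t₀) * h Cls.S t₀ + kk Cls.S t₀ < r →
      ∀ᶠ z in 𝓝[>] t₀, (z - t₀)⁻¹ * (h Cls.S z - h Cls.S t₀) < r := by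
    refine evgen Cls.S (fun s => 1 + β * m Cls.I s) (fun s => kk Cls.S s)
      (fun ξ s => cross Cls.S ξ s + KK Cls.S ξ s) ?_ ?_ ?_ ?_ ?_ ?_
    · exact continuousOn_const.add (continuousOn_const.mul (hmC Cls.I))
    · exact kkcont Cls.S
    · intro s hs
      show (0:ℝ) ≤ 1 + β * m Cls.I s
      have := mnon Cls.I s hs.1
      nlinarith [mul_nonneg hβ0.le this]
    · exact fun s hs => kknn Cls.S s hs.1
    · exact fun ξ s hs => dAll Cls.S ξ s hs.1
    · intro ξ s hs
      show ‖(0:ℂ) + KK Cls.S ξ s‖ ≤ kk Cls.S s * ξ ^ 2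
      rw [zero_add]
      exact kkbound Cls.S ξ s hs
  have evI : ∀ t₀, t₀ ∈ Ico (0:ℝ) T → ∀ r,
      -(1 + γ) * h Cls.I t₀ + (β * m Cls.I t₀ * h Cls.S t₀ + kk Cls.I t₀) < r →
      ∀ᶠ z in 𝓝[>] t₀, (z - t₀)⁻¹ * (h Cls.I z - h Cls.I t₀) < r := by
    refine evgen Cls.I (fun s => 1 + γ) (fun s => β * m Cls.I s * h Cls.S s + kk Cls.I s)
      (fun ξ s => cross Cls.I ξ s + KK Cls.I ξ s) ?_ ?_ ?_ ?_ ?_ ?_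
    · exact continuousOn_const
    · exact ((continuousOn_const.mul (hmC Cls.I)).mul (hcont Cls.S)).add (kkcont Cls.I)
    · intro s _
      show (0:ℝ) ≤ 1 + γ
      linarith
    · intro s hs
      show (0:ℝ) ≤ β * m Cls.I s * h Cls.S s + kk Cls.I s
      have h1 := mnon Cls.I s hs.1
      have h2 := hnn Cls.S s
      have h3 := kknn Cls.I s hs.1
      nlinarith [mul_nonneg (mul_nonneg hβ0.le h1) h2]
    · exact fun ξ s hs => dAll Cls.I ξ s hs.1
    · intro ξ s hs
      show ‖((β * m Cls.I s : ℝ) : ℂ) * φ Cls.S ξ s + KK Cls.I ξ s‖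
        ≤ (β * m Cls.I s * h Cls.S s + kk Cls.I s) * ξ ^ 2
      have h1 : ‖((β * m Cls.I s : ℝ) : ℂ) * φ Cls.S ξ s‖
          ≤ β * m Cls.I s * (h Cls.S s * ξ ^ 2) := by
        rw [norm_mul, Complex.norm_real, Real.norm_eq_abs,
          abs_of_nonneg (mul_nonneg hβ0.le (mnon Cls.I s hs.1))]
        exact mul_le_mul_of_nonneg_left (hle Cls.S ξ s hs)
          (mul_nonneg hβ0.le (mnon Cls.I s hs.1))
      have h2 := kkbound Cls.I ξ s hs
      calc ‖((β * m Cls.I s : ℝ) : ℂ) * φ Cls.S ξ s + KK Cls.I ξ s‖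
          ≤ ‖((β * m Cls.I s : ℝ) : ℂ) * φ Cls.S ξ s‖ + ‖KK Cls.I ξ s‖ := norm_add_le _ _
        _ ≤ β * m Cls.I s * (h Cls.S s * ξ ^ 2) + kk Cls.I s * ξ ^ 2 := by linarith
        _ = (β * m Cls.I s * h Cls.S s + kk Cls.I s) * ξ ^ 2 := by ring
  have evR : ∀ t₀, t₀ ∈ Ico (0:ℝ) T → ∀ r,
      -(1 : ℝ) * h Cls.R t₀ + (γ * h Cls.I t₀ + kk Cls.R t₀) < r →
      ∀ᶠ z in 𝓝[>] t₀, (z - t₀)⁻¹ * (h Cls.R z - h Cls.R t₀) < r := by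
    refine evgen Cls.R (fun _ => (1:ℝ)) (fun s => γ * h Cls.I s + kk Cls.R s)
      (fun ξ s => cross Cls.R ξ s + KK Cls.R ξ s) ?_ ?_ ?_ ?_ ?_ ?_
    · exact continuousOn_const
    · exact (continuousOn_const.mul (hcont Cls.I)).add (kkcont Cls.R)
    · intro s _
      show (0:ℝ) ≤ 1
      norm_num
    · intro s hs
      show (0:ℝ) ≤ γ * h Cls.I s + kk Cls.R s
      have h2 := hnn Cls.I s
      have h3 := kknn Cls.R s hs.1
      nlinarith [mul_nonneg hγ0.le h2]
    · exact fun ξ s hs => dAll Cls.R ξ s hs.1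
    · intro ξ s hs
      show ‖((γ : ℝ) : ℂ) * φ Cls.I ξ s + KK Cls.R ξ s‖
        ≤ (γ * h Cls.I s + kk Cls.R s) * ξ ^ 2
      have h1 : ‖((γ : ℝ) : ℂ) * φ Cls.I ξ s‖ ≤ γ * (h Cls.I s * ξ ^ 2) := by
        rw [norm_mul, Complex.norm_real, Real.norm_eq_abs, abs_of_nonneg hγ0.le]
        exact mul_le_mul_of_nonneg_left (hle Cls.I ξ s hs) hγ0.le
      have h2 := kkbound Cls.R ξ s hs
      calc ‖((γ : ℝ) : ℂ) * φ Cls.I ξ s + KK Cls.R ξ s‖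
          ≤ ‖((γ : ℝ) : ℂ) * φ Cls.I ξ s‖ + ‖KK Cls.R ξ s‖ := norm_add_le _ _
        _ ≤ γ * (h Cls.I s * ξ ^ 2) + kk Cls.R s * ξ ^ 2 := by linarith
        _ = (γ * h Cls.I s + kk Cls.R s) * ξ ^ 2 := by ring
  -- Grönwall for the sum
  set w : ℝ → ℝ := fun s => ∑ J : Cls, h J s with hwdef
  have hwc : ContinuousOn w (Icc (0:ℝ) T) := by
    have he : w = fun s => h Cls.S s + h Cls.I s + h Cls.R s :=
      funext fun s => Cls.sum_def _
    rw [he]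
    exact ((hcont Cls.S).add (hcont Cls.I)).add (hcont Cls.R)
  set fw : ℝ → ℝ := fun s =>
    (-(1 + β * m Cls.I s) * h Cls.S s + kk Cls.S s)
    + (-(1 + γ) * h Cls.I s + (β * m Cls.I s * h Cls.S s + kk Cls.I s))
    + (-(1 : ℝ) * h Cls.R s + (γ * h Cls.I s + kk Cls.R s)) with hfwdef
  have hgron : ∀ x ∈ Icc (0:ℝ) T, w x ≤ gronwallBound (w 0) (-(1 - ν)) 0 (x - 0) := by
    apply le_gronwallBound_of_liminf_deriv_right_le (f' := fw) hwc
    · intro x hx r hrr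
      have hq : 0 < (r - fw x) / 3 := div_pos (sub_pos.mpr hrr) (by norm_num)
      have e1 := evS x hx ((-(1 + β * m Cls.I x) * h Cls.S x + kk Cls.S x) + (r - fw x) / 3)
        (by linarith)
      have e2 := evI x hx ((-(1 + γ) * h Cls.I x
        + (β * m Cls.I x * h Cls.S x + kk Cls.I x)) + (r - fw x) / 3) (by linarith)
      have e3 := evR x hx ((-(1 : ℝ) * h Cls.R x + (γ * h Cls.I x + kk Cls.R x))
        + (r - fw x) / 3) (by linarith)
      apply Filter.Eventually.frequently
      filter_upwards [e1, e2, e3] with z g1 g2 g3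
      have hsplit : (z - x)⁻¹ * (w z - w x)
          = (z - x)⁻¹ * (h Cls.S z - h Cls.S x) + (z - x)⁻¹ * (h Cls.I z - h Cls.I x)
            + (z - x)⁻¹ * (h Cls.R z - h Cls.R x) := by
        rw [hwdef]
        simp only []
        rw [Cls.sum_def (fun J => h J z), Cls.sum_def (fun J => h J x)]
        ring
      rw [hsplit]
      have hfx : fw x = (-(1 + β * m Cls.I x) * h Cls.S x + kk Cls.S x)
          + (-(1 + γ) * h Cls.I x + (β * m Cls.I x * h Cls.S x + kk Cls.I x))
          + (-(1 : ℝ) * h Cls.R x + (γ * h Cls.I x + kk Cls.R x)) := rfl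
      linarith
    · exact le_refl _
    · intro x hx
      have hxm : x ∈ Icc (0:ℝ) T := ⟨hx.1, hx.2.le⟩
      have kks := kksum x hxm
      rw [Cls.sum_def (fun H => kk H x), Cls.sum_def (fun H => h H x)] at kks
      have hwx : w x = h Cls.S x + h Cls.I x + h Cls.R x := Cls.sum_def _
      have hfx : fw x = -(h Cls.S x + h Cls.I x + h Cls.R x)
          + (kk Cls.S x + kk Cls.I x + kk Cls.R x) := by
        rw [hfwdef]
        ring
      rw [hfx, hwx]
      linarith
  have hwT : w T ≤ w 0 * Real.exp (-(1 - ν) * T) := by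
    have := hgron T ⟨hT, le_refl _⟩
    rwa [sub_zero, gronwallBound_ε0] at this
  -- conclusion
  have hTmem : T ∈ Icc (0:ℝ) T := ⟨hT, le_refl _⟩
  calc ∑ J : Cls, d2 (f J T) (g J T)
      = ∑ J : Cls, ENNReal.ofReal (h J T) :=
        Finset.sum_congr rfl fun J _ => (ENNReal.ofReal_toReal (d2fin J T hTmem)).symm
    _ = ENNReal.ofReal (∑ J : Cls, h J T) :=
        (ENNReal.ofReal_sum_of_nonneg (fun J _ => ENNReal.toReal_nonneg)).symm
    _ ≤ ENNReal.ofReal (w 0 * Real.exp (-(1 - ν) * T)) := ENNReal.ofReal_le_ofReal hwT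
    _ = ENNReal.ofReal (Real.exp (-(1 - ν) * T)) * ENNReal.ofReal (w 0) := by
        rw [mul_comm (w 0) (Real.exp (-(1 - ν) * T)),
          ENNReal.ofReal_mul (Real.exp_nonneg _)]
    _ = ENNReal.ofReal (Real.exp (-(1 - ν) * T)) * ∑ J : Cls, d2 (f J 0) (g J 0) := by
        congr 1
        rw [show w 0 = ∑ J : Cls, h J 0 from rfl,
          ENNReal.ofReal_sum_of_nonneg (fun J _ => ENNReal.toReal_nonneg)]
        exact Finset.sum_congr rfl fun J _ => ENNReal.ofReal_toReal (d2fin0 J)
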